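/- arXiv:2506.03104 — 2 statements merged into one kernel-verified Lean document; each statement's English description precedes it below -/
import Mathlib

section
/- Suppose site-level random variables satisfy θ₁ₖ = γ₁ₖ + γ₂ₖ·β₁ₖ + γ₃ₖ·β₂ₖ + θ_{Vk}·α₁ₖ, where (α₁ₖ, β₁ₖ, β₂ₖ) is jointly independent of (θ_{Vk}, γ₂ₖ, γ₃ₖ) and each of α₁ₖ, β₁ₖ, β₂ₖ is independent of γ₁ₖ. Then E[θ₁ₖ] = E[γ₁ₖ] + E[γ₂ₖ]·E[β₁ₖ] + E[γ₃ₖ]·E[β₂ₖ] + E[θ_{Vk}]·E[α₁ₖ], and consequently the cumulative ATE δ_ATE = E[γ₁ₖ] + E[γ₂ₖ] + E[γ₃ₖ] + E[θ_{Vk}]·E[α₁ₖ] is identified as a linear combination of the identifiable quantities E[θ₁ₖ], E[β₁ₖ], E[β₂ₖ], E[α₁ₖ] together with the coefficients E[γ₂ₖ], E[γ₃ₖ], E[θ_{Vk}]: specifically δ_ATE = E[θ₁ₖ] + E[γ₂ₖ]·(1 − E[β₁ₖ]) + E[γ₃ₖ]·(1 − E[β₂ₖ]). -/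
open MeasureTheory ProbabilityTheory

/-- Between-site identification step of the MS2T-IV strategy: under the
between-site independence assumption, E[θ₁ₖ] factors, and the cumulative ATE
δ_ATE = E[γ₁ₖ] + E[γ₂ₖ] + E[γ₃ₖ] + E[θ_Vk]·E[α₁ₖ] satisfies
δ_ATE = E[θ₁ₖ] + E[γ₂ₖ](1 − E[β₁ₖ]) + E[γ₃ₖ](1 − E[β₂ₖ]). -/
theorem stmt_12 {Ω : Type*} [MeasurableSpace Ω] (μ : Measure Ω) [IsProbabilityMeasure μ]
    (θ₁ α₁ β₁ β₂ θV γ₁ γ₂ γ₃ : Ω → ℝ)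
    (hα₁ : MemLp α₁ 2 μ) (hβ₁ : MemLp β₁ 2 μ) (hβ₂ : MemLp β₂ 2 μ)
    (hθV : MemLp θV 2 μ) (hγ₁ : MemLp γ₁ 2 μ) (hγ₂ : MemLp γ₂ 2 μ) (hγ₃ : MemLp γ₃ 2 μ)
    (hθ₁ : ∀ ω, θ₁ ω = γ₁ ω + γ₂ ω * β₁ ω + γ₃ ω * β₂ ω + θV ω * α₁ ω)
    (hindep : IndepFun (fun ω => (α₁ ω, β₁ ω, β₂ ω)) (fun ω => (θV ω, γ₂ ω, γ₃ ω)) μ)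
    (hα₁γ₁ : IndepFun α₁ γ₁ μ) (hβ₁γ₁ : IndepFun β₁ γ₁ μ) (hβ₂γ₁ : IndepFun β₂ γ₁ μ)
    (δATE : ℝ)
    (hδ : δATE = (∫ ω, γ₁ ω ∂μ) + (∫ ω, γ₂ ω ∂μ) + (∫ ω, γ₃ ω ∂μ)
      + (∫ ω, θV ω ∂μ) * ∫ ω, α₁ ω ∂μ) :
    (∫ ω, θ₁ ω ∂μ = (∫ ω, γ₁ ω ∂μ) + (∫ ω, γ₂ ω ∂μ) * (∫ ω, β₁ ω ∂μ)
        + (∫ ω, γ₃ ω ∂μ) * (∫ ω, β₂ ω ∂μ)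
        + (∫ ω, θV ω ∂μ) * ∫ ω, α₁ ω ∂μ) ∧
      δATE = (∫ ω, θ₁ ω ∂μ) + (∫ ω, γ₂ ω ∂μ) * (1 - ∫ ω, β₁ ω ∂μ)
        + (∫ ω, γ₃ ω ∂μ) * (1 - ∫ ω, β₂ ω ∂μ) := by
  have iα : Integrable α₁ μ := hα₁.integrable one_le_two
  have iβ₁ : Integrable β₁ μ := hβ₁.integrable one_le_two
  have iβ₂ : Integrable β₂ μ := hβ₂.integrable one_le_two
  have iθV : Integrable θV μ := hθV.integrable one_le_two
  have iγ₁ : Integrable γ₁ μ := hγ₁.integrable one_le_two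
  have iγ₂ : Integrable γ₂ μ := hγ₂.integrable one_le_two
  have iγ₃ : Integrable γ₃ μ := hγ₃.integrable one_le_two
  have m1 : Measurable fun p : ℝ × ℝ × ℝ => p.1 := measurable_fst
  have m2 : Measurable fun p : ℝ × ℝ × ℝ => p.2.1 := measurable_fst.comp measurable_snd
  have m3 : Measurable fun p : ℝ × ℝ × ℝ => p.2.2 := measurable_snd.comp measurable_snd
  have hβ₁γ₂ : IndepFun β₁ γ₂ μ := hindep.comp m2 m2
  have hβ₂γ₃ : IndepFun β₂ γ₃ μ := hindep.comp m3 m3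
  have hα₁θV : IndepFun α₁ θV μ := hindep.comp m1 m1
  have e1 := hβ₁γ₂.symm.integral_mul_eq_mul_integral iγ₂.aestronglyMeasurable iβ₁.aestronglyMeasurable
  have e2 := hβ₂γ₃.symm.integral_mul_eq_mul_integral iγ₃.aestronglyMeasurable iβ₂.aestronglyMeasurable
  have e3 := hα₁θV.symm.integral_mul_eq_mul_integral iθV.aestronglyMeasurable iα.aestronglyMeasurable
  have e1' : ∫ a, γ₂ a * β₁ a ∂μ = (∫ ω, γ₂ ω ∂μ) * ∫ ω, β₁ ω ∂μ := e1
  have e2' : ∫ a, γ₃ a * β₂ a ∂μ = (∫ ω, γ₃ ω ∂μ) * ∫ ω, β₂ ω ∂μ := e2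
  have e3' : ∫ a, θV a * α₁ a ∂μ = (∫ ω, θV ω ∂μ) * ∫ ω, α₁ ω ∂μ := e3
  have i1 : Integrable (fun ω => γ₂ ω * β₁ ω) μ := hβ₁γ₂.symm.integrable_mul iγ₂ iβ₁
  have i2 : Integrable (fun ω => γ₃ ω * β₂ ω) μ := hβ₂γ₃.symm.integrable_mul iγ₃ iβ₂
  have i3 : Integrable (fun ω => θV ω * α₁ ω) μ := hα₁θV.symm.integrable_mul iθV iα
  have i12 : Integrable (fun ω => γ₁ ω + γ₂ ω * β₁ ω) μ := iγ₁.add i1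
  have i123 : Integrable (fun ω => γ₁ ω + γ₂ ω * β₁ ω + γ₃ ω * β₂ ω) μ := i12.add i2
  have key : ∫ ω, θ₁ ω ∂μ = (∫ ω, γ₁ ω ∂μ) + (∫ ω, γ₂ ω ∂μ) * (∫ ω, β₁ ω ∂μ)
      + (∫ ω, γ₃ ω ∂μ) * (∫ ω, β₂ ω ∂μ) + (∫ ω, θV ω ∂μ) * ∫ ω, α₁ ω ∂μ := by
    have h0 : ∫ ω, θ₁ ω ∂μ = ∫ ω, γ₁ ω + γ₂ ω * β₁ ω + γ₃ ω * β₂ ω + θV ω * α₁ ω ∂μ := by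
      simp_rw [hθ₁]
    rw [h0, integral_add i123 i3, integral_add i12 i2, integral_add iγ₁ i1, e1', e2', e3']
  refine ⟨key, ?_⟩
  rw [hδ, key]; ring
end

section
/- Let Z ∈ {0,1} be independent of (V(0), V(1), D(0), D(1), θ₀, θ_V, γ₁, γ₂, γ₃), suppose Y(z,d) = θ₀ + θ_V·V(z) + γ₁z + γ₂d + γ₃zd, and let Y = Y(Z, D(Z)) be the observed outcome. If Cov(γ₂, D(1)−D(0)) = 0, Cov(γ₃, D(1)) = 0, Cov(θ_V, V(1)−V(0)) = 0, and additionally E[D(1)−D(0)] = 1 and E[D(1)] = 1 and there is no direct or indirect Phase I effect (E[γ₁] = 0 and either E[θ_V] = 0 or E[V(1)−V(0)] = 0), then E[Y | Z=1] − E[Y | Z=0] = E[γ₂] + E[γ₃] = δ_ATE − E[γ₁] − E[θ_V]E[V(1)−V(0)] = δ_ATE, i.e., the standard ITT (or IV with full compliance) analysis recovers the cumulative ATE exactly when compliance is perfect and the Phase I exposure has no direct or V-mediated effect. -/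
open MeasureTheory ProbabilityTheory

/-- Exactly when compliance is perfect and the Phase I exposure has no direct or
V-mediated effect, the naive ITT analysis recovers the cumulative ATE:
E[Y | Z=1] − E[Y | Z=0] = E[γ₂] + E[γ₃] = δ_ATE. -/
theorem stmt_18 {Ω : Type*} [MeasurableSpace Ω] (μ : Measure Ω) [IsProbabilityMeasure μ]
    (Z V0 V1 D0 D1 θ₀ θV γ₁ γ₂ γ₃ : Ω → ℝ)
    (hZ01 : ∀ ω, Z ω = 0 ∨ Z ω = 1)
    (hZmeas : Measurable Z)
    (hp : 0 < (μ {ω | Z ω = 1}).toReal ∧ (μ {ω | Z ω = 1}).toReal < 1)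
    -- Z independent of all potential outcomes and coefficients
    (hindep : IndepFun Z
      (fun ω => (V0 ω, V1 ω, D0 ω, D1 ω, θ₀ ω, θV ω, γ₁ ω, γ₂ ω, γ₃ ω)) μ)
    -- structural model and observed outcome Y = Y(Z, D(Z))
    (D Y : Ω → ℝ)
    (hD : ∀ ω, D ω = Z ω * D1 ω + (1 - Z ω) * D0 ω)
    (hYdef : ∀ ω, Y ω = θ₀ ω + θV ω * (Z ω * V1 ω + (1 - Z ω) * V0 ω)
      + γ₁ ω * Z ω + γ₂ ω * D ω + γ₃ ω * Z ω * D ω)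
    -- integrability
    (hYint : Integrable Y μ)
    (hθ₀ : Integrable θ₀ μ) (hθV : Integrable θV μ) (hγ₁ : Integrable γ₁ μ)
    (hγ₂ : Integrable γ₂ μ) (hγ₃ : Integrable γ₃ μ)
    (hVd : Integrable (fun ω => V1 ω - V0 ω) μ)
    (hDd : Integrable (fun ω => D1 ω - D0 ω) μ) (hD1int : Integrable D1 μ)
    (hpV : Integrable (fun ω => θV ω * (V1 ω - V0 ω)) μ)
    (hp2 : Integrable (fun ω => γ₂ ω * (D1 ω - D0 ω)) μ)
    (hp3 : Integrable (fun ω => γ₃ ω * D1 ω) μ)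
    -- within-site zero covariance conditions
    (hcov2 : ∫ ω, γ₂ ω * (D1 ω - D0 ω) ∂μ =
      (∫ ω, γ₂ ω ∂μ) * ∫ ω, (D1 ω - D0 ω) ∂μ)
    (hcov3 : ∫ ω, γ₃ ω * D1 ω ∂μ = (∫ ω, γ₃ ω ∂μ) * ∫ ω, D1 ω ∂μ)
    (hcovV : ∫ ω, θV ω * (V1 ω - V0 ω) ∂μ =
      (∫ ω, θV ω ∂μ) * ∫ ω, (V1 ω - V0 ω) ∂μ)
    -- full compliance in expectation and no direct or indirect Phase I effect
    (hfull1 : ∫ ω, (D1 ω - D0 ω) ∂μ = 1)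
    (hfull2 : ∫ ω, D1 ω ∂μ = 1)
    (hγ₁0 : ∫ ω, γ₁ ω ∂μ = 0)
    (hnoind : (∫ ω, θV ω ∂μ = 0) ∨ (∫ ω, (V1 ω - V0 ω) ∂μ = 0))
    (δATE : ℝ)
    (hδ : δATE = (∫ ω, γ₁ ω ∂μ) + (∫ ω, γ₂ ω ∂μ) + (∫ ω, γ₃ ω ∂μ)
      + (∫ ω, θV ω ∂μ) * ∫ ω, (V1 ω - V0 ω) ∂μ) :
    (∫ ω in {ω | Z ω = 1}, Y ω ∂μ) / (μ {ω | Z ω = 1}).toReal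
        - (∫ ω in {ω | Z ω = 0}, Y ω ∂μ) / (μ {ω | Z ω = 0}).toReal
      = (∫ ω, γ₂ ω ∂μ) + (∫ ω, γ₃ ω ∂μ) ∧
      (∫ ω, γ₂ ω ∂μ) + (∫ ω, γ₃ ω ∂μ) = δATE := by

  classical
  obtain ⟨hp0, hp1⟩ := hp
  set p : ℝ := (μ {ω | Z ω = 1}).toReal with hpdef
  set g : Ω → ℝ := fun ω => θV ω * (V1 ω - V0 ω) + γ₁ ω + γ₂ ω * (D1 ω - D0 ω)
      + γ₃ ω * D1 ω with hgdef
  set f₀ : Ω → ℝ := fun ω => θ₀ ω + θV ω * V0 ω + γ₂ ω * D0 ω with hf₀def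
  -- pointwise decomposition Y = f₀ + Z * g
  have hY' : ∀ ω, Y ω = f₀ ω + Z ω * g ω := by
    intro ω
    rcases hZ01 ω with h | h <;> simp only [hYdef, hD, hf₀def, hgdef, h] <;> ring
  -- measurability of set
  have hset1 : MeasurableSet {ω | Z ω = 1} := hZmeas (measurableSet_singleton 1)
  have hset0 : MeasurableSet {ω | Z ω = 0} := hZmeas (measurableSet_singleton 0)
  -- independence of Z and g
  have hig : IndepFun Z g μ := by
    have hφ : Measurable (fun x : ℝ × ℝ × ℝ × ℝ × ℝ × ℝ × ℝ × ℝ × ℝ =>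
        x.2.2.2.2.2.1 * (x.2.1 - x.1) + x.2.2.2.2.2.2.1
        + x.2.2.2.2.2.2.2.1 * (x.2.2.2.1 - x.2.2.1)
        + x.2.2.2.2.2.2.2.2 * x.2.2.2.1) := by fun_prop
    exact hindep.comp measurable_id hφ
  -- independence of Z and f₀
  have hif : IndepFun Z f₀ μ := by
    have hφ : Measurable (fun x : ℝ × ℝ × ℝ × ℝ × ℝ × ℝ × ℝ × ℝ × ℝ =>
        x.2.2.2.2.1 + x.2.2.2.2.2.1 * x.1 + x.2.2.2.2.2.2.2.1 * x.2.2.1) := by fun_prop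
    exact hindep.comp measurable_id hφ
  -- integrability
  have hgint : Integrable g μ := by
    have := ((hpV.add hγ₁).add hp2).add hp3
    exact this
  have hZbd : ∀ᵐ ω ∂μ, ‖Z ω‖ ≤ 1 := by
    filter_upwards with ω
    rcases hZ01 ω with h | h <;> simp [h]
  have hZint : Integrable Z μ := by
    refine Integrable.mono' (integrable_const (1:ℝ)) hZmeas.aestronglyMeasurable hZbd
  have hZg : Integrable (fun ω => Z ω * g ω) μ := by
    refine Integrable.bdd_mul hgint hZmeas.aestronglyMeasurable hZbd
  have hf₀int : Integrable f₀ μ := by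
    have h1 : Integrable (fun ω => Y ω - Z ω * g ω) μ := hYint.sub hZg
    have : f₀ = fun ω => Y ω - Z ω * g ω := by
      funext ω; rw [hY' ω]; ring
    rw [this]; exact h1
  -- E[Z] = p
  have hEZ : ∫ ω, Z ω ∂μ = p := by
    have hZind : Z = Set.indicator {ω | Z ω = 1} (fun _ => (1:ℝ)) := by
      funext ω
      rcases hZ01 ω with h | h <;>
        simp [Set.indicator_apply, Set.mem_setOf_eq, h]
    rw [hZind, integral_indicator hset1, setIntegral_const]
    simp [hpdef]
    rfl
  -- factorizations
  have hEZg : ∫ ω, Z ω * g ω ∂μ = p * ∫ ω, g ω ∂μ := by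
    have h := hig.integral_mul_eq_mul_integral hZint.aestronglyMeasurable hgint.aestronglyMeasurable
    rw [hEZ] at h
    exact h
  have hEZf₀ : ∫ ω, Z ω * f₀ ω ∂μ = p * ∫ ω, f₀ ω ∂μ := by
    have h := hif.integral_mul_eq_mul_integral hZint.aestronglyMeasurable hf₀int.aestronglyMeasurable
    rw [hEZ] at h
    exact h
  have hZf₀ : Integrable (fun ω => Z ω * f₀ ω) μ := by
    refine Integrable.bdd_mul hf₀int hZmeas.aestronglyMeasurable hZbd
  -- set integrals
  have hZsq : ∀ ω, Z ω * Z ω = Z ω := by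
    intro ω; rcases hZ01 ω with h | h <;> simp [h]
  have hint1 : ∫ ω in {ω | Z ω = 1}, Y ω ∂μ = p * (∫ ω, f₀ ω ∂μ) + p * ∫ ω, g ω ∂μ := by
    have h1 : ∫ ω in {ω | Z ω = 1}, Y ω ∂μ = ∫ ω, Z ω * Y ω ∂μ := by
      rw [← integral_indicator hset1]
      congr 1
      funext ω
      rcases hZ01 ω with h | h <;>
        simp [Set.indicator_apply, Set.mem_setOf_eq, h]
    have h2 : (fun ω => Z ω * Y ω) = fun ω => Z ω * f₀ ω + Z ω * g ω := by
      funext ω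
      rw [hY' ω, mul_add, ← mul_assoc, hZsq ω]
    rw [h1, h2, integral_add hZf₀ hZg, hEZf₀, hEZg]
  have hYeq : (fun ω => Y ω) = fun ω => f₀ ω + Z ω * g ω := by
    funext ω; exact hY' ω
  have hEY : ∫ ω, Y ω ∂μ = (∫ ω, f₀ ω ∂μ) + p * ∫ ω, g ω ∂μ := by
    calc ∫ ω, Y ω ∂μ = ∫ ω, (f₀ ω + Z ω * g ω) ∂μ := by rw [← hYeq]
    _ = (∫ ω, f₀ ω ∂μ) + ∫ ω, Z ω * g ω ∂μ := integral_add hf₀int hZg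
    _ = (∫ ω, f₀ ω ∂μ) + p * ∫ ω, g ω ∂μ := by rw [hEZg]
  -- complement set
  have hcompl : {ω | Z ω = 0} = {ω | Z ω = 1}ᶜ := by
    ext ω
    rcases hZ01 ω with h | h <;> simp [h]
  have hμ1ne : μ {ω | Z ω = 1} ≠ ⊤ := measure_ne_top μ _
  have hμ0 : (μ {ω | Z ω = 0}).toReal = 1 - p := by
    rw [hcompl, measure_compl hset1 hμ1ne, measure_univ,
      ENNReal.toReal_sub_of_le prob_le_one ENNReal.one_ne_top, ENNReal.toReal_one]
  have hint0 : ∫ ω in {ω | Z ω = 0}, Y ω ∂μ = (1 - p) * ∫ ω, f₀ ω ∂μ := by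
    have h1 : ∫ ω in {ω | Z ω = 0}, Y ω ∂μ
        = (∫ ω, Y ω ∂μ) - ∫ ω in {ω | Z ω = 1}, Y ω ∂μ := by
      rw [hcompl]
      rw [← integral_add_compl hset1 hYint]
      ring
    rw [h1, hEY, hint1]; ring
  -- value of E[g]
  have hEg : ∫ ω, g ω ∂μ = (∫ ω, γ₂ ω ∂μ) + ∫ ω, γ₃ ω ∂μ := by
    have h1 : ∫ ω, (θV ω * (V1 ω - V0 ω) + γ₁ ω) ∂μ
        = (∫ ω, θV ω * (V1 ω - V0 ω) ∂μ) + ∫ ω, γ₁ ω ∂μ := integral_add hpV hγ₁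
    have h2 : ∫ ω, (θV ω * (V1 ω - V0 ω) + γ₁ ω + γ₂ ω * (D1 ω - D0 ω)) ∂μ
        = (∫ ω, (θV ω * (V1 ω - V0 ω) + γ₁ ω) ∂μ) + ∫ ω, γ₂ ω * (D1 ω - D0 ω) ∂μ :=
      integral_add (hpV.add hγ₁) hp2
    have h3 : ∫ ω, g ω ∂μ
        = (∫ ω, (θV ω * (V1 ω - V0 ω) + γ₁ ω + γ₂ ω * (D1 ω - D0 ω)) ∂μ)
          + ∫ ω, γ₃ ω * D1 ω ∂μ := integral_add ((hpV.add hγ₁).add hp2) hp3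
    rw [h3, h2, h1, hcovV, hcov2, hcov3, hfull1, hfull2, hγ₁0]
    rcases hnoind with h | h <;> rw [h] <;> ring
  constructor
  · rw [hint1, hint0, hμ0]
    have hp0' : p ≠ 0 := ne_of_gt hp0
    have hp1' : (1 : ℝ) - p ≠ 0 := by linarith
    rw [hEg]
    field_simp
    ring
  · rw [hδ, hγ₁0]
    rcases hnoind with h | h <;> rw [h] <;> ring
end
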